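/- arXiv:1807.05471 — 2 statements merged into one kernel-verified Lean document; each statement's English description precedes it below -/
import Mathlib

section
/- Let S = k[[x_1,…,x_m]], f ∈ S, R = S/(f), and (A,B) an n×n matrix factorization of f with M = coker(A). Then for each i, the partial derivative ∂f/∂x_i stably annihilates M; explicitly, taking C = ∂B/∂x_i and D = ∂A/∂x_i yields A·(∂B/∂x_i) + (∂A/∂x_i)·B = (∂f/∂x_i)·I by the product rule applied to AB = f·I. -/
set_option synthInstance.maxHeartbeats 1000000
set_option maxHeartbeats 1000000

universe u

/-- `r` stably annihilates `M`: multiplication by `r` on `M` factors through a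
projective `R`-module. -/
def StablyAnnihilates (R : Type u) [CommRing R] (M : Type u) [AddCommGroup M] [Module R M]
    (r : R) : Prop :=
  ∃ (P : Type u) (_ : AddCommGroup P) (_ : Module R P) (_ : Module.Projective R P)
    (a : M →ₗ[R] P) (b : P →ₗ[R] M), b ∘ₗ a = r • (LinearMap.id : M →ₗ[R] M)

noncomputable section

variable {k : Type u} [Field k] {m n : ℕ}

/-- The formal partial derivative `∂/∂x_i` on `k[[x_1, …, x_m]]`, given on coefficients by
`(∂g/∂x_i)_d = (d_i + 1) · g_{d + e_i}`. -/
def mvPderiv (i : Fin m) (g : MvPowerSeries (Fin m) k) : MvPowerSeries (Fin m) k :=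
  fun d => ((d i + 1 : ℕ) : k) * MvPowerSeries.coeff (d + Finsupp.single i 1) g

lemma coeff_mvPderiv (i : Fin m) (g : MvPowerSeries (Fin m) k) (d : Fin m →₀ ℕ) :
    MvPowerSeries.coeff d (mvPderiv i g)
      = ((d i + 1 : ℕ) : k) * MvPowerSeries.coeff (d + Finsupp.single i 1) g := rfl

lemma mvPderiv_zero (i : Fin m) : mvPderiv i (0 : MvPowerSeries (Fin m) k) = 0 := by
  apply MvPowerSeries.ext; intro d
  rw [coeff_mvPderiv]; simp

lemma mvPderiv_add (i : Fin m) (g h : MvPowerSeries (Fin m) k) :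
    mvPderiv i (g + h) = mvPderiv i g + mvPderiv i h := by
  apply MvPowerSeries.ext; intro d
  rw [map_add, coeff_mvPderiv, coeff_mvPderiv, coeff_mvPderiv, map_add]
  ring

lemma mvPderiv_sum {α : Type*} (i : Fin m) (s : Finset α)
    (F : α → MvPowerSeries (Fin m) k) :
    mvPderiv i (∑ a ∈ s, F a) = ∑ a ∈ s, mvPderiv i (F a) := by
  classical
  induction s using Finset.induction_on with
  | empty => simpa using mvPderiv_zero i
  | insert a s hx ih =>
      rw [Finset.sum_insert hx, Finset.sum_insert hx, mvPderiv_add, ih]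

lemma shift_sum (i : Fin m) (d : Fin m →₀ ℕ) (G H : (Fin m →₀ ℕ) → k) :
    ∑ t ∈ Finset.HasAntidiagonal.antidiagonal (d + Finsupp.single i 1),
        (((t.2 : Fin m →₀ ℕ) i : ℕ) : k) * (G t.1 * H t.2)
      = ∑ t ∈ Finset.HasAntidiagonal.antidiagonal d,
          ((((t.2 : Fin m →₀ ℕ) i + 1 : ℕ)) : k) * (G t.1 * H (t.2 + Finsupp.single i 1)) := by
  rw [← Finset.sum_filter_of_ne (p := fun t => t.2 i ≠ 0)
    (by intro t ht hne h0; apply hne; rw [h0]; simp)]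
  refine Finset.sum_nbij' (fun t => (t.1, t.2 - Finsupp.single i 1))
    (fun t => (t.1, t.2 + Finsupp.single i 1)) ?_ ?_ ?_ ?_ ?_
  · rintro ⟨p, q⟩ ht
    simp only [Finset.mem_filter, Finset.HasAntidiagonal.mem_antidiagonal] at ht ⊢
    obtain ⟨hsum, hne⟩ := ht
    have hle : Finsupp.single i 1 ≤ q := Finsupp.single_le_iff.mpr (Nat.one_le_iff_ne_zero.mpr hne)
    have : p + (q - Finsupp.single i 1) + Finsupp.single i 1 = d + Finsupp.single i 1 := by
      rw [add_assoc, tsub_add_cancel_of_le hle, hsum]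
    exact add_right_cancel this
  · rintro ⟨p, q⟩ ht
    simp only [Finset.HasAntidiagonal.mem_antidiagonal] at ht
    simp only [Finset.mem_filter, Finset.HasAntidiagonal.mem_antidiagonal]
    constructor
    · rw [← add_assoc, ht]
    · simp
  · rintro ⟨p, q⟩ ht
    simp only [Finset.mem_filter, Finset.HasAntidiagonal.mem_antidiagonal] at ht
    have hle : Finsupp.single i 1 ≤ q :=
      Finsupp.single_le_iff.mpr (Nat.one_le_iff_ne_zero.mpr ht.2)
    simp [tsub_add_cancel_of_le hle]
  · rintro ⟨p, q⟩ _; simp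
  · rintro ⟨p, q⟩ ht
    simp only [Finset.mem_filter, Finset.HasAntidiagonal.mem_antidiagonal] at ht
    have hle : Finsupp.single i 1 ≤ q :=
      Finsupp.single_le_iff.mpr (Nat.one_le_iff_ne_zero.mpr ht.2)
    have h1 : ((q - Finsupp.single i 1) : Fin m →₀ ℕ) i + 1 = q i := by
      rw [Finsupp.tsub_apply, Finsupp.single_eq_same]
      omega
    simp only
    rw [tsub_add_cancel_of_le hle, h1]

lemma mvPderiv_mul (i : Fin m) (g h : MvPowerSeries (Fin m) k) :
    mvPderiv i (g * h) = g * mvPderiv i h + mvPderiv i g * h := by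
  classical
  apply MvPowerSeries.ext; intro d
  have hL : MvPowerSeries.coeff d (mvPderiv i (g * h))
      = ∑ t ∈ Finset.HasAntidiagonal.antidiagonal (d + Finsupp.single i 1),
          ((d i + 1 : ℕ) : k) * (MvPowerSeries.coeff t.1 g * MvPowerSeries.coeff t.2 h) := by
    rw [coeff_mvPderiv, MvPowerSeries.coeff_mul, Finset.mul_sum]
  have hsplit : ∀ t ∈ Finset.HasAntidiagonal.antidiagonal (d + Finsupp.single i 1),
      ((d i + 1 : ℕ) : k) * (MvPowerSeries.coeff t.1 g * MvPowerSeries.coeff t.2 h)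
      = (((t.1 : Fin m →₀ ℕ) i : ℕ) : k) *
          (MvPowerSeries.coeff t.1 g * MvPowerSeries.coeff t.2 h)
        + (((t.2 : Fin m →₀ ℕ) i : ℕ) : k) *
          (MvPowerSeries.coeff t.1 g * MvPowerSeries.coeff t.2 h) := by
    rintro ⟨p, q⟩ ht
    simp only [Finset.HasAntidiagonal.mem_antidiagonal] at ht
    have : p i + q i = d i + 1 := by
      have := congrArg (fun (e : Fin m →₀ ℕ) => e i) ht
      simpa [Finsupp.add_apply, Finsupp.single_eq_same] using this
    rw [show ((d i + 1 : ℕ) : k) = ((p i : ℕ) : k) + ((q i : ℕ) : k) by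
      rw [← Nat.cast_add, this]]
    ring
  rw [hL, Finset.sum_congr rfl hsplit, Finset.sum_add_distrib, map_add]
  have h2 : ∑ t ∈ Finset.HasAntidiagonal.antidiagonal (d + Finsupp.single i 1),
      (((t.2 : Fin m →₀ ℕ) i : ℕ) : k) *
        (MvPowerSeries.coeff t.1 g * MvPowerSeries.coeff t.2 h)
      = MvPowerSeries.coeff d (g * mvPderiv i h) := by
    rw [shift_sum i d (fun p => MvPowerSeries.coeff p g)
      (fun q => MvPowerSeries.coeff q h), MvPowerSeries.coeff_mul]
    apply Finset.sum_congr rfl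
    rintro ⟨p, q⟩ _
    rw [coeff_mvPderiv]
    ring
  have h1 : ∑ t ∈ Finset.HasAntidiagonal.antidiagonal (d + Finsupp.single i 1),
      (((t.1 : Fin m →₀ ℕ) i : ℕ) : k) *
        (MvPowerSeries.coeff t.1 g * MvPowerSeries.coeff t.2 h)
      = MvPowerSeries.coeff d (mvPderiv i g * h) := by
    rw [Finsupp.sum_antidiagonal_swap (d + Finsupp.single i 1)
      (fun p q => ((p i : ℕ) : k) * (MvPowerSeries.coeff p g * MvPowerSeries.coeff q h))]
    rw [show (∑ t ∈ Finset.HasAntidiagonal.antidiagonal (d + Finsupp.single i 1),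
        (((t.2 : Fin m →₀ ℕ) i : ℕ) : k) *
          (MvPowerSeries.coeff t.2 g * MvPowerSeries.coeff t.1 h))
      = ∑ t ∈ Finset.HasAntidiagonal.antidiagonal (d + Finsupp.single i 1),
        (((t.2 : Fin m →₀ ℕ) i : ℕ) : k) *
          (MvPowerSeries.coeff t.1 h * MvPowerSeries.coeff t.2 g) from
      Finset.sum_congr rfl (by intros; ring)]
    rw [shift_sum i d (fun p => MvPowerSeries.coeff p h) (fun q => MvPowerSeries.coeff q g)]
    rw [MvPowerSeries.coeff_mul, Finsupp.sum_antidiagonal_swap d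
      (fun p q => MvPowerSeries.coeff p (mvPderiv i g) * MvPowerSeries.coeff q h)]
    apply Finset.sum_congr rfl
    rintro ⟨p, q⟩ _
    simp only
    rw [coeff_mvPderiv]
    ring
  rw [h1, h2]
  ring

/-- The hypersurface ring `R = S/(f)`. -/
abbrev HyperSurf (f : MvPowerSeries (Fin m) k) : Type u :=
  MvPowerSeries (Fin m) k ⧸ Ideal.span {f}

/-- The cokernel of (the reduction mod `f` of) a square matrix `A` over
`S = k[[x_1, …, x_m]]`, as a module over `R = S/(f)`. -/
abbrev MFCoker (f : MvPowerSeries (Fin m) k) (A : Matrix (Fin n) (Fin n)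
    (MvPowerSeries (Fin m) k)) : Type u :=
  (Fin n → HyperSurf f) ⧸
    LinearMap.range (Matrix.mulVecLin (A.map (Ideal.Quotient.mk (Ideal.span {f}))))

/-- Let `(A, B)` be a matrix factorization of `f ∈ S = k[[x_1, …, x_m]]` with
`M = coker A`. Differentiating `AB = f·I` gives
`A·(∂B/∂x_i) + (∂A/∂x_i)·B = (∂f/∂x_i)·I`, and the partial derivative `∂f/∂x_i`
stably annihilates `M`. -/
theorem pderiv_stablyAnnihilates
    (f : MvPowerSeries (Fin m) k)
    (A B : Matrix (Fin n) (Fin n) (MvPowerSeries (Fin m) k))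
    (hAB : A * B = f • (1 : Matrix (Fin n) (Fin n) (MvPowerSeries (Fin m) k)))
    (hBA : B * A = f • (1 : Matrix (Fin n) (Fin n) (MvPowerSeries (Fin m) k)))
    (i : Fin m) :
    A * B.map (mvPderiv i) + (A.map (mvPderiv i)) * B =
        (mvPderiv i f) • (1 : Matrix (Fin n) (Fin n) (MvPowerSeries (Fin m) k)) ∧
      StablyAnnihilates (HyperSurf f) (MFCoker f A)
        (Ideal.Quotient.mk (Ideal.span {f}) (mvPderiv i f)) := by
  classical
  have part1 : A * B.map (mvPderiv i) + (A.map (mvPderiv i)) * B =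
      (mvPderiv i f) • (1 : Matrix (Fin n) (Fin n) (MvPowerSeries (Fin m) k)) := by
    ext j l
    rw [Matrix.add_apply, Matrix.mul_apply, Matrix.mul_apply, ← Finset.sum_add_distrib]
    have hterm : ∀ x ∈ (Finset.univ : Finset (Fin n)),
        A j x * (B.map (mvPderiv i)) x l + (A.map (mvPderiv i)) j x * B x l
          = mvPderiv i (A j x * B x l) := by
      intro x _
      rw [Matrix.map_apply, Matrix.map_apply, mvPderiv_mul]
    rw [Finset.sum_congr rfl hterm, ← mvPderiv_sum, ← Matrix.mul_apply, hAB]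
    simp only [Matrix.smul_apply, Matrix.one_apply, smul_eq_mul, mul_ite, mul_one, mul_zero]
    by_cases hjl : j = l
    · simp [hjl]
    · simp [hjl, mvPderiv_zero]
  refine ⟨part1, ?_⟩
  let S := MvPowerSeries (Fin m) k
  let π : S →+* HyperSurf f := Ideal.Quotient.mk (Ideal.span {f})
  have hf0 : π f = 0 := Ideal.Quotient.eq_zero_iff_mem.mpr (Ideal.subset_span rfl)
  have hmap_smul : ∀ (g : S),
      ((g • (1 : Matrix (Fin n) (Fin n) S)).map π)
        = π g • (1 : Matrix (Fin n) (Fin n) (HyperSurf f)) := by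
    intro g
    ext j l
    simp [Matrix.map_apply, Matrix.one_apply, mul_ite, mul_one, mul_zero, apply_ite π]
  set Abar := A.map π
  set Bbar := B.map π
  set C := (B.map (mvPderiv i)).map π
  set D := (A.map (mvPderiv i)).map π
  set r := π (mvPderiv i f)
  have key : Abar * C + D * Bbar = r • 1 := by
    have h := congrArg (fun (X : Matrix (Fin n) (Fin n) S) => X.map π) part1
    simpa [Matrix.map_add, Matrix.map_mul, hmap_smul, Abar, Bbar, C, D, r] using h
  have hBA0 : Bbar * Abar = 0 := by
    have h := congrArg (fun (X : Matrix (Fin n) (Fin n) S) => X.map π) hBA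
    have h2 : Bbar * Abar = π f • 1 := by
      simpa [Matrix.map_mul, hmap_smul, Abar, Bbar] using h
    rw [h2, hf0]
    exact zero_smul (HyperSurf f) (1 : Matrix (Fin n) (Fin n) (HyperSurf f))
  set Q : Submodule (HyperSurf f) (Fin n → HyperSurf f) :=
    LinearMap.range (Matrix.mulVecLin Abar)
  have hrange : Q ≤ LinearMap.ker (Matrix.mulVecLin Bbar) := by
    rintro x ⟨v, rfl⟩
    rw [LinearMap.mem_ker]
    have : Matrix.mulVecLin Bbar (Matrix.mulVecLin Abar v)
        = Matrix.mulVecLin (Bbar * Abar) v := by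
      rw [Matrix.mulVecLin_mul]; rfl
    rw [this, hBA0, Matrix.mulVecLin_zero]; rfl
  refine ⟨Fin n → HyperSurf f, inferInstance, inferInstance, inferInstance,
    Submodule.liftQ Q (Matrix.mulVecLin Bbar) hrange,
    Q.mkQ ∘ₗ Matrix.mulVecLin D, ?_⟩
  apply Submodule.linearMap_qext
  apply LinearMap.ext
  intro v
  simp only [LinearMap.comp_apply, Submodule.liftQ_apply, Submodule.mkQ_apply,
    LinearMap.smul_apply, LinearMap.id_apply, Matrix.mulVecLin_apply]
  rw [← Submodule.Quotient.mk_smul, Submodule.Quotient.eq]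
  have hv : r • v = Abar.mulVec (C.mulVec v) + D.mulVec (Bbar.mulVec v) := by
    have h1 : (r • (1 : Matrix (Fin n) (Fin n) (HyperSurf f))).mulVec v = r • v := by
      funext j
      simp [Matrix.mulVec, dotProduct, Matrix.one_apply, mul_ite, ite_mul,
        mul_one, zero_mul, mul_zero, Finset.sum_ite_eq, Pi.smul_apply, smul_eq_mul]
    rw [← h1, ← key, Matrix.add_mulVec, Matrix.mulVec_mulVec, Matrix.mulVec_mulVec]
  have : D.mulVec (Bbar.mulVec v) - r • v = -(Abar.mulVec (C.mulVec v)) := by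
    rw [hv]; abel
  rw [this]
  exact Q.neg_mem ⟨C.mulVec v, rfl⟩
end
end

section
/- Let R be a Gorenstein ring and M a maximal Cohen-Macaulay R-module such that Λ = End_R(M) is also maximal Cohen-Macaulay as an R-module. If r and s both stably annihilate M (i.e., multiplication by each factors through a projective on M), then rs stably annihilates Λ as an R-module: multiplication by rs on Λ factors through a projective R-module. -/
set_option synthInstance.maxHeartbeats 1000000
set_option maxHeartbeats 1000000

open CategoryTheory

universe u

/-- A commutative Noetherian ring is Gorenstein if it has finite injective dimension over
itself; equivalently, there is `n` such that `Ext^i(M, R) = 0` for all modules `M` and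
all `i ≥ n`. -/
def IsGorensteinRing (R : Type u) [CommRing R] : Prop :=
  IsNoetherianRing R ∧
    ∃ n : ℕ, ∀ (M : ModuleCat.{u} R) (i : ℕ), n ≤ i →
      Subsingleton (((Ext R (ModuleCat.{u} R) i).obj (Opposite.op M)).obj (ModuleCat.of R R))

/-- A finitely generated module `M` over a Gorenstein ring is maximal Cohen-Macaulay if
`Ext^i(M, R) = 0` for all `i > 0`. -/
def IsMCM (R : Type u) [CommRing R] (M : Type u) [AddCommGroup M] [Module R M] : Prop :=
  Module.Finite R M ∧
    ∀ i : ℕ, 0 < i →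
      Subsingleton (((Ext R (ModuleCat.{u} R) i).obj
        (Opposite.op (ModuleCat.of R M))).obj (ModuleCat.of R R))

/-- If `M` is finitely generated and `r` stably annihilates `M`, then multiplication by
`r` factors through a *finite free* module. -/
lemma stablyAnnihilates_finite_free (R : Type u) [CommRing R] (M : Type u) [AddCommGroup M]
    [Module R M] (hfin : Module.Finite R M) (r : R)
    (h : ∃ (P : Type u) (_ : AddCommGroup P) (_ : Module R P) (_ : Module.Projective R P)
      (a : M →ₗ[R] P) (b : P →ₗ[R] M), b ∘ₗ a = r • (LinearMap.id : M →ₗ[R] M)) :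
    ∃ (ι : Type u) (_ : Fintype ι) (a : M →ₗ[R] (ι → R)) (b : (ι → R) →ₗ[R] M),
      b ∘ₗ a = r • (LinearMap.id : M →ₗ[R] M) := by
  obtain ⟨P, _, _, hP, a, b, hba⟩ := h
  obtain ⟨σ, hσ⟩ := Module.projective_def.mp hP
  classical
  obtain ⟨S, hS⟩ := hfin.fg_top
  -- T : finite set of "coordinates" in P covering the supports of σ (a m) for generators m
  set T : Finset P := S.sup (fun m => (σ (a m)).support) with hT
  -- every m has σ (a m) supported in T
  have hsupp : ∀ m : M, σ (a m) ∈ Finsupp.supported R R (↑T : Set P) := by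
    intro m
    have hm : m ∈ (Finsupp.supported R R (↑T : Set P)).comap (σ ∘ₗ a) := by
      have : m ∈ Submodule.span R (↑S : Set M) := by rw [hS]; trivial
      refine Submodule.span_le.mpr ?_ this
      intro x hx
      simp only [SetLike.mem_coe, Submodule.mem_comap, LinearMap.coe_comp, Function.comp_apply]
      intro p hp
      exact Finset.coe_subset.mpr (Finset.le_sup (f := fun m => (σ (a m)).support) hx) hp
    exact hm
  refine ⟨(↥T : Type u), inferInstance, ?_, ?_, ?_⟩
  · exact LinearMap.pi (fun t => Finsupp.lapply (t : P) ∘ₗ σ ∘ₗ a)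
  · exact { toFun := fun g => ∑ t : ↥T, g t • b (t : P)
            map_add' := by intro g₁ g₂; simp [add_smul, Finset.sum_add_distrib]
            map_smul' := by intro c g; simp [smul_smul, Finset.smul_sum] }
  · ext m
    simp only [LinearMap.coe_comp, Function.comp_apply, LinearMap.coe_mk, AddHom.coe_mk,
      LinearMap.pi_apply, Finsupp.lapply_apply, LinearMap.smul_apply, LinearMap.id_apply]
    have key : ∑ t : ↥T, (σ (a m)) (t : P) • b (t : P) = b (a m) := by
      simp_rw [← map_smul b]
      rw [← map_sum]
      congr 1
      rw [Finset.sum_coe_sort T (fun p => (σ (a m)) p • p)]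
      have h := Finsupp.linearCombination_apply_of_mem_supported (R := R) (v := (id : P → P))
        (hsupp m)
      simp only [id] at h
      rw [← h, hσ]
    show ∑ t : ↥T, (σ (a m)) (t : P) • b (t : P) = r • m
    rw [key]
    have := congrArg (fun f : M →ₗ[R] M => f m) hba
    simpa using this

theorem mul_stablyAnnihilates_end' (R : Type u) [CommRing R]
    (M : Type u) [AddCommGroup M] [Module R M] (hfin : Module.Finite R M) (r s : R)
    (hr : ∃ (P : Type u) (_ : AddCommGroup P) (_ : Module R P) (_ : Module.Projective R P)
      (a : M →ₗ[R] P) (b : P →ₗ[R] M), b ∘ₗ a = r • (LinearMap.id : M →ₗ[R] M))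
    (hs : ∃ (P : Type u) (_ : AddCommGroup P) (_ : Module R P) (_ : Module.Projective R P)
      (a : M →ₗ[R] P) (b : P →ₗ[R] M), b ∘ₗ a = s • (LinearMap.id : M →ₗ[R] M)) :
    ∃ (P : Type u) (_ : AddCommGroup P) (_ : Module R P) (_ : Module.Projective R P)
      (a : Module.End R M →ₗ[R] P) (b : P →ₗ[R] Module.End R M),
      b ∘ₗ a = (r * s) • (LinearMap.id : Module.End R M →ₗ[R] Module.End R M) := by
  obtain ⟨ι, _, a, b, hba⟩ := stablyAnnihilates_finite_free R M hfin r hr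
  obtain ⟨κ, _, c, d, hdc⟩ := stablyAnnihilates_finite_free R M hfin s hs
  refine ⟨(ι → R) →ₗ[R] (κ → R), inferInstance, inferInstance, inferInstance,
    { toFun := fun f => c ∘ₗ f ∘ₗ b
      map_add' := by intro f g; ext x; simp
      map_smul' := by intro t f; ext x; simp },
    { toFun := fun g => d ∘ₗ g ∘ₗ a
      map_add' := by intro f g; ext x; simp
      map_smul' := by intro t f; ext x; simp }, ?_⟩
  ext f m
  simp only [LinearMap.coe_comp, Function.comp_apply, LinearMap.coe_mk, AddHom.coe_mk,
    LinearMap.smul_apply, LinearMap.id_apply]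
  have h1 : b (a m) = r • m := by
    have := congrArg (fun f : M →ₗ[R] M => f m) hba; simpa using this
  have h2 : ∀ x, d (c x) = s • x := by
    intro x
    have := congrArg (fun f : M →ₗ[R] M => f x) hdc; simpa using this
  rw [h1, map_smul, h2]
  rw [smul_smul, mul_comm]

/-- Let `R` be Gorenstein and `M` maximal Cohen-Macaulay such that `Λ = End_R(M)` is
also maximal Cohen-Macaulay as an `R`-module. If `r` and `s` both stably annihilate `M`
(multiplication by each factors through a projective on `M`), then `r * s` stably
annihilates `Λ`: multiplication by `r * s` on `Λ` factors through a projective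
`R`-module. Hence `(sann M)² ⊆ sann Λ`. -/
theorem mul_stablyAnnihilates_end (R : Type u) [CommRing R] (hR : IsGorensteinRing R)
    (M : Type u) [AddCommGroup M] [Module R M] (hM : IsMCM R M)
    (hΛ : IsMCM R (Module.End R M)) (r s : R)
    (hr : StablyAnnihilates R M r) (hs : StablyAnnihilates R M s) :
    StablyAnnihilates R (Module.End R M) (r * s) := by
  exact mul_stablyAnnihilates_end' R M hM.1 r s hr hs
end
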